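/- Fix Δ ∈ (0, 1] and φ ∈ (0, π/3]. There exist constants c > 0 and ε₀ > 0 such that for every a ∈ ℝ², every unit vector d ∈ ℝ², and every ε ∈ (0, ε₀], the number of ε-granular locations satisfies |L(ε)| ≥ c · φ · Δ² / ε². -/

import Mathlib

open Real Set

/-- Map an angle in `(-π, π]` (as returned by `Complex.arg`) to `[0, 2π)`. -/
noncomputable def toCCW (θ : ℝ) : ℝ := if 0 ≤ θ then θ else θ + 2 * Real.pi

/-- The counterclockwise angle from `w` to `z` (as vectors in `ℝ² = ℂ`), in `[0, 2π)`. -/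
noncomputable def ccwAngle (w z : ℂ) : ℝ := toCCW ((z / w).arg)

/-- The drawing hull `H(a, d, φ, Δ)`: all points within distance `Δ` of the anchor `a`
whose counterclockwise angle (measured from direction `d`) lies in `[0, φ)`,
together with the anchor itself. -/
noncomputable def dhull (a d : ℂ) (φ Δ : ℝ) : Set ℂ :=
  {a} ∪ {x : ℂ | dist x a ≤ Δ ∧ ccwAngle d (x - a) ∈ Set.Ico 0 φ}

/-- The `ε`-granular locations `L(ε)` of a drawing hull: the anchor together with the
nonnegative `2ε`-grid with origin `a + ε•d`, `x`-axis direction `d` (and `y`-axis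
direction `d` rotated counterclockwise by `π/2`, i.e. `I * d`), intersected with the hull. -/
noncomputable def dlocs (a d : ℂ) (φ Δ ε : ℝ) : Set ℂ :=
  ({a} ∪ {x : ℂ | ∃ i j : ℕ,
      x = a + ((1 + 2 * (i : ℝ)) * ε) • d + (2 * (j : ℝ) * ε) • (Complex.I * d)})
    ∩ dhull a d φ Δ

/-- The defining triples `T(ε)`: `{a, a + ε•d, a + (1+2i)ε•d}` for `i ≥ 1` with `(1+2i)ε ≤ Δ`. -/
noncomputable def dtriples (a d : ℂ) (Δ ε : ℝ) : Set (Set ℂ) :=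
  {T : Set ℂ | ∃ i : ℕ, 1 ≤ i ∧ (1 + 2 * (i : ℝ)) * ε ≤ Δ ∧
    T = {a, a + ε • d, a + ((1 + 2 * (i : ℝ)) * ε) • d}}

/-- The `ε`-granular states `A(ε) = {S ∪ T : S ⊆ L(ε), T ∈ T(ε)}`. -/
noncomputable def dstates (a d : ℂ) (φ Δ ε : ℝ) : Set (Set ℂ) :=
  {U : Set ℂ | ∃ S ⊆ dlocs a d φ Δ ε, ∃ T ∈ dtriples a d Δ ε, U = S ∪ T}

/-- The `ε`-granular states of size `ℓ`, `A^ℓ(ε)`. -/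
noncomputable def dstatesOfSize (a d : ℂ) (φ Δ ε : ℝ) (ℓ : ℕ) : Set (Set ℂ) :=
  {U ∈ dstates a d φ Δ ε | U.ncard = ℓ}

set_option maxHeartbeats 1000000

lemma aux_diff (a d : ℂ) (s t : ℝ) :
    a + s • d + t • (Complex.I * d) - a = ((s : ℂ) + t * Complex.I) * d := by
  simp [Complex.real_smul]; ring

lemma aux_dist (a d : ℂ) (hd : ‖d‖ = 1) (s t : ℝ) :
    dist (a + s • d + t • (Complex.I * d)) a = Real.sqrt (s^2 + t^2) := by
  rw [dist_eq_norm, aux_diff, norm_mul, hd, mul_one, Complex.norm_def,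
    Complex.normSq_add_mul_I]

lemma aux_sum (N : ℕ) : ∑ i ∈ Finset.range N, ((1:ℝ) + 2*i) = (N:ℝ)^2 := by
  induction N with
  | zero => simp
  | succ n ih => rw [Finset.sum_range_succ, ih]; push_cast; ring

/-- If a grid point (with `s > 0`, `t ≥ 0`, `t/s` small) is within `Δ`, it is in the hull. -/
lemma aux_mem_hull (a d : ℂ) (φ Δ : ℝ) (hd : ‖d‖ = 1) (hφ : φ ∈ Set.Ioc 0 (π / 3))
    (s t : ℝ) (hs : 0 < s) (ht : 0 ≤ t) (hts : t ≤ s * (φ/4)) (hdist : Real.sqrt (s^2+t^2) ≤ Δ) :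
    a + s • d + t • (Complex.I * d) ∈ dhull a d φ Δ := by
  have hd0 : d ≠ 0 := by intro h; simp [h] at hd
  have hzdiv : (a + s • d + t • (Complex.I * d) - a) / d = (s : ℂ) + t * Complex.I := by
    rw [aux_diff]; field_simp
  have hre : ((s : ℂ) + t * Complex.I).re = s := by simp
  have him : ((s : ℂ) + t * Complex.I).im = t := by simp
  have habs : s ≤ ‖(s : ℂ) + t * Complex.I‖ := by
    rw [Complex.norm_def, Complex.normSq_add_mul_I]
    calc s = Real.sqrt (s^2) := by rw [Real.sqrt_sq hs.le]
    _ ≤ _ := Real.sqrt_le_sqrt (by nlinarith)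
  have harg0 : 0 ≤ ((s : ℂ) + t * Complex.I).arg := Complex.arg_nonneg_iff.2 (by simp [ht])
  have hargφ : ((s : ℂ) + t * Complex.I).arg < φ := by
    rw [Complex.arg_of_re_nonneg (by rw [hre]; exact hs.le), him]
    have hπ : (0:ℝ) < π := Real.pi_pos
    have h1 : t / ‖(s : ℂ) + t * Complex.I‖ ≤ t / s :=
      div_le_div_of_nonneg_left ht hs habs
    have h2 : t / s ≤ φ/4 := (div_le_iff₀ hs).2 (by linarith [hts])
    have h3 : φ/4 ≤ Real.sin (φ/2) := by
      have := Real.mul_le_sin (x := φ/2) (by linarith [hφ.1]) (by linarith [hφ.2, hπ])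
      have hπ4 : π ≤ 4 := by linarith [Real.pi_le_four]
      have : 2/π * (φ/2) ≤ Real.sin (φ/2) := this
      have h4 : φ/4 ≤ 2/π * (φ/2) := by
        have h5 : φ/4 ≤ φ/π := div_le_div_of_nonneg_left hφ.1.le hπ hπ4
        have h6 : 2/π * (φ/2) = φ/π := by ring
        linarith
      linarith
    calc Real.arcsin (t / ‖(s : ℂ) + t * Complex.I‖)
        ≤ Real.arcsin (Real.sin (φ/2)) := Real.monotone_arcsin (by linarith)
      _ = φ/2 := Real.arcsin_sin (by linarith [hφ.1]) (by linarith [hφ.2, hπ])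
      _ < φ := by linarith [hφ.1]
  refine Or.inr ⟨by rw [aux_dist a d hd]; exact hdist, ?_⟩
  rw [ccwAngle, hzdiv, toCCW, if_pos harg0]
  exact ⟨harg0, hargφ⟩

/-- For fixed `Δ ∈ (0,1]` and `φ ∈ (0, π/3]`, there are constants
`c > 0` and `ε₀ > 0` such that for every anchor, unit direction and `ε ∈ (0, ε₀]`,
the number of `ε`-granular locations is at least `c · φ · Δ² / ε²`. -/
theorem card_locs_lower_bound (Δ φ : ℝ)
    (hΔ : Δ ∈ Set.Ioc (0 : ℝ) 1) (hφ : φ ∈ Set.Ioc 0 (π / 3)) :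
    ∃ c > (0 : ℝ), ∃ ε₀ > (0 : ℝ), ∀ a d : ℂ, ‖d‖ = 1 → ∀ ε : ℝ, 0 < ε → ε ≤ ε₀ →
      c * φ * Δ ^ 2 / ε ^ 2 ≤ ((dlocs a d φ Δ ε).ncard : ℝ) := by
  obtain ⟨hΔ0, hΔ1⟩ := hΔ
  refine ⟨1/2048, by norm_num, Δ/16, by linarith, ?_⟩
  intro a d hd ε hε hεΔ
  have hπ : (0:ℝ) < π := Real.pi_pos
  set N := Nat.floor (Δ/(8*ε)) with hN
  set M : ℕ → ℕ := fun i => Nat.floor ((1 + 2*(i:ℝ))*φ/8) + 1 with hM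
  set f : (Σ _ : ℕ, ℕ) → ℂ := fun p =>
    a + ((1 + 2 * (p.1 : ℝ)) * ε) • d + (2 * (p.2 : ℝ) * ε) • (Complex.I * d) with hf
  set S : Finset (Σ _ : ℕ, ℕ) := (Finset.range N).sigma (fun i => Finset.range (M i)) with hS
  -- injectivity of f
  have hinj : Function.Injective f := by
    have hd0 : d ≠ 0 := by intro h; simp [h] at hd
    intro p q hpq
    have h2 := congrArg (fun z => z - a) hpq
    simp only [hf] at h2
    rw [aux_diff, aux_diff] at h2
    have h1 := mul_right_cancel₀ hd0 h2
    have hre := congrArg Complex.re h1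
    have him := congrArg Complex.im h1
    simp only [Complex.add_re, Complex.ofReal_re, Complex.mul_re, Complex.I_re, Complex.I_im,
      Complex.ofReal_im, Complex.add_im, Complex.mul_im, mul_zero, mul_one, zero_mul,
      sub_zero, zero_add, add_zero, zero_sub, neg_zero] at hre him
    have hp1 : p.1 = q.1 := by
      have h3 := mul_right_cancel₀ hε.ne' hre
      have : (p.1:ℝ) = q.1 := by linarith
      exact_mod_cast this
    have hp2 : p.2 = q.2 := by
      have h3 := mul_right_cancel₀ hε.ne' him
      have : (p.2:ℝ) = q.2 := by linarith
      exact_mod_cast this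
    exact Sigma.ext hp1 (by simp [hp2])
  -- the image is inside dlocs
  have hsub : ↑(S.image f) ⊆ dlocs a d φ Δ ε := by
    intro x hx
    simp only [Finset.coe_image, Set.mem_image, Finset.mem_coe, hS, Finset.mem_sigma,
      Finset.mem_range] at hx
    obtain ⟨p, ⟨hi, hj⟩, rfl⟩ := hx
    have hs : (0:ℝ) < (1 + 2 * (p.1 : ℝ)) * ε := by positivity
    have ht : (0:ℝ) ≤ 2 * (p.2 : ℝ) * ε := by positivity
    have hsN : (1 + 2 * (p.1 : ℝ)) * ε ≤ Δ/4 := by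
      have h1 : (p.1 : ℝ) + 1 ≤ N := by exact_mod_cast hi
      have h2 : (N : ℝ) ≤ Δ/(8*ε) := Nat.floor_le (by positivity)
      have : (1 + 2 * (p.1 : ℝ)) ≤ 2 * N := by linarith
      calc (1 + 2 * (p.1 : ℝ)) * ε ≤ 2 * (N:ℝ) * ε := by nlinarith
        _ ≤ 2 * (Δ/(8*ε)) * ε := by nlinarith
        _ = Δ/4 := by field_simp; ring
    have hts : 2 * (p.2 : ℝ) * ε ≤ ((1 + 2 * (p.1 : ℝ)) * ε) * (φ/4) := by
      have h1 : (p.2 : ℝ) ≤ Nat.floor ((1 + 2*(p.1:ℝ))*φ/8) := by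
        have : p.2 ≤ M p.1 - 1 := by omega
        have : p.2 ≤ Nat.floor ((1 + 2*(p.1:ℝ))*φ/8) := by simp [hM] at this ⊢; omega
        exact_mod_cast this
      have h2 : (Nat.floor ((1 + 2*(p.1:ℝ))*φ/8) : ℝ) ≤ (1 + 2*(p.1:ℝ))*φ/8 :=
        Nat.floor_le (by have := hφ.1; positivity)
      nlinarith
    have hdist : Real.sqrt (((1 + 2 * (p.1 : ℝ)) * ε)^2 + (2 * (p.2 : ℝ) * ε)^2) ≤ Δ := by
      have ht2 : 2 * (p.2 : ℝ) * ε ≤ Δ/4 := by nlinarith [hφ.2, Real.pi_le_four]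
      calc Real.sqrt (((1 + 2 * (p.1 : ℝ)) * ε)^2 + (2 * (p.2 : ℝ) * ε)^2)
          ≤ Real.sqrt (Δ^2) := Real.sqrt_le_sqrt (by nlinarith)
        _ = Δ := Real.sqrt_sq hΔ0.le
    exact ⟨Or.inr ⟨p.1, p.2, rfl⟩, aux_mem_hull a d φ Δ hd hφ _ _ hs ht hts hdist⟩
  -- dlocs is finite
  have hfin : (dlocs a d φ Δ ε).Finite := by
    set K := Nat.floor (Δ/ε) + 1 with hK
    have : dlocs a d φ Δ ε ⊆ insert a
        ((fun p : ℕ × ℕ => a + ((1 + 2 * (p.1 : ℝ)) * ε) • d + (2 * (p.2 : ℝ) * ε) • (Complex.I * d)) ''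
          ↑((Finset.range K) ×ˢ (Finset.range K))) := by
      rintro x ⟨hx1, hx2⟩
      rcases hx1 with h | ⟨i, j, rfl⟩
      · exact Or.inl h
      right
      have hdist : dist (a + ((1 + 2 * (i:ℝ)) * ε) • d + (2 * (j:ℝ) * ε) • (Complex.I * d)) a ≤ Δ := by
        rcases hx2 with h | h
        · rw [Set.mem_singleton_iff] at h; rw [h]; simpa using hΔ0.le
        · exact h.1
      rw [aux_dist a d hd] at hdist
      have hs : (0:ℝ) ≤ (1 + 2 * (i:ℝ)) * ε := by positivity
      have ht : (0:ℝ) ≤ 2 * (j:ℝ) * ε := by positivity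
      have hsq : ((1 + 2 * (i:ℝ)) * ε)^2 + (2 * (j:ℝ) * ε)^2 ≤ Δ^2 := by
        have := Real.sq_sqrt (by positivity : (0:ℝ) ≤ ((1 + 2 * (i:ℝ)) * ε)^2 + (2 * (j:ℝ) * ε)^2)
        nlinarith [Real.sqrt_nonneg (((1 + 2 * (i:ℝ)) * ε)^2 + (2 * (j:ℝ) * ε)^2)]
      have hiK : i < K := by
        have h1 : (1 + 2 * (i:ℝ)) * ε ≤ Δ := by nlinarith
        have h2 : (i:ℝ) ≤ Δ/ε := by rw [le_div_iff₀ hε]; nlinarith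
        have h3 : i ≤ Nat.floor (Δ/ε) := Nat.le_floor h2
        omega
      have hjK : j < K := by
        have h1 : 2 * (j:ℝ) * ε ≤ Δ := by nlinarith
        have h2 : (j:ℝ) ≤ Δ/ε := by rw [le_div_iff₀ hε]; nlinarith
        have h3 : j ≤ Nat.floor (Δ/ε) := Nat.le_floor h2
        omega
      exact ⟨(i, j), by simp [hiK, hjK], rfl⟩
    exact Set.Finite.subset (Set.Finite.insert a (Set.Finite.image _ (Finset.finite_toSet _))) this
  -- counting
  have hcard : (S.card : ℝ) ≤ ((dlocs a d φ Δ ε).ncard : ℝ) := by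
    have h1 : (S.image f).card = S.card := Finset.card_image_of_injective S hinj
    have h2 : (S.image f).card ≤ (dlocs a d φ Δ ε).ncard := by
      rw [← Set.ncard_coe_finset]
      exact Set.ncard_le_ncard hsub hfin
    exact_mod_cast h1 ▸ h2
  have hScard : (S.card : ℝ) = ∑ i ∈ Finset.range N, (M i : ℝ) := by
    rw [hS, Finset.card_sigma]
    push_cast
    simp [hM]
  have hSge : (N:ℝ)^2 * φ / 8 ≤ (S.card : ℝ) := by
    rw [hScard]
    have h1 : ∀ i ∈ Finset.range N, ((1:ℝ) + 2*i) * φ / 8 ≤ (M i : ℝ) := by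
      intro i _
      have := Nat.lt_floor_add_one ((1 + 2*(i:ℝ))*φ/8)
      simp only [hM]; push_cast
      linarith
    calc (N:ℝ)^2 * φ / 8 = ∑ i ∈ Finset.range N, ((1:ℝ) + 2*i) * φ / 8 := by
          rw [← Finset.sum_div, ← Finset.sum_mul, aux_sum]
      _ ≤ _ := Finset.sum_le_sum h1
  have hNge : Δ/(16*ε) ≤ (N:ℝ) := by
    have h1 : Δ/(8*ε) - 1 < (N:ℝ) := by
      have := Nat.lt_floor_add_one (Δ/(8*ε))
      simp only [hN]; linarith
    have h2 : (1:ℝ) ≤ Δ/(16*ε) := by rw [le_div_iff₀ (by positivity)]; linarith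
    have : Δ/(16*ε) ≤ Δ/(8*ε) - 1 := by
      have : Δ/(8*ε) = 2 * (Δ/(16*ε)) := by field_simp; ring
      linarith
    linarith
  have hfinal : 1/2048 * φ * Δ^2 / ε^2 ≤ (N:ℝ)^2 * φ / 8 := by
    have h1 : (Δ/(16*ε))^2 ≤ (N:ℝ)^2 := by
      exact pow_le_pow_left₀ (by positivity) hNge 2
    have h2 : (Δ/(16*ε))^2 = Δ^2/(256*ε^2) := by field_simp; ring
    have h3 : 1/2048 * φ * Δ^2 / ε^2 = Δ^2/(256*ε^2) * φ / 8 := by field_simp; ring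
    rw [h3]
    have hφ0 := hφ.1
    nlinarith
  linarith
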